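/- Let 𝕜 be ℝ or ℂ, let X and Y be normed 𝕜-spaces, and let u : X →L[𝕜] Y be a continuous linear operator that is not bounded below. Then there exists a continuous linear functional φ : X →L[𝕜] 𝕜 such that the point (1, 0) ∈ 𝕜 × Y lies in the closure of the set { (φ x, -u x) : x ∈ X }. Consequently, letting S be this closure (a closed subspace of 𝕜 × Y), the map j : 𝕜 → (𝕜 × Y) ⧸ S sending λ to the class of (λ, 0) satisfies j(1) = 0 and is therefore not injective. -/

import Mathlib

/-- If a continuous linear operator `u : X →L[𝕜] Y` between normed spaces over `ℝ` or
`ℂ` is not bounded below, then there exists a continuous linear functional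
`φ : X →L[𝕜] 𝕜` such that `(1, 0)` lies in the closure of `{ (φ x, -u x) | x ∈ X }`;
hence, with `S` this closed subspace of `𝕜 × Y`, the pushout map
`j : 𝕜 → (𝕜 × Y) ⧸ S`, `λ ↦ [(λ, 0)]`, satisfies `j 1 = 0` and is not injective. -/
theorem not_universalMono_of_not_boundedBelow {𝕜 : Type*} [RCLike 𝕜]
    {X Y : Type*} [NormedAddCommGroup X] [NormedSpace 𝕜 X]
    [NormedAddCommGroup Y] [NormedSpace 𝕜 Y]
    (u : X →L[𝕜] Y)
    (hu : ¬ ∃ δ : ℝ, 0 < δ ∧ ∀ x : X, δ * ‖x‖ ≤ ‖u x‖) :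
    ∃ φ : X →L[𝕜] 𝕜,
      ((1 : 𝕜), (0 : Y)) ∈ closure (Set.range (fun x : X => (φ x, -u x))) ∧
      Submodule.Quotient.mk
        (p := Submodule.topologicalClosure
          (LinearMap.range (LinearMap.prod φ.toLinearMap (-u.toLinearMap))))
        ((1 : 𝕜), (0 : Y)) = 0 ∧
      ¬ Function.Injective (fun lam : 𝕜 =>
        Submodule.Quotient.mk
          (p := Submodule.topologicalClosure
            (LinearMap.range (LinearMap.prod φ.toLinearMap (-u.toLinearMap))))
          (lam, (0 : Y))) := by
  classical
  -- Step 1: the precomposition map `ψ ↦ ψ ∘ u` between dual spaces is not surjective.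
  have hns : ¬ Function.Surjective
      (fun ψ : Y →L[𝕜] 𝕜 => ψ.comp u) := by
    intro hs
    apply hu
    have hsT : Function.Surjective ((ContinuousLinearMap.compL 𝕜 X Y 𝕜).flip u) := by
      intro f
      obtain ⟨ψ, hψ⟩ := hs f
      exact ⟨ψ, by simpa using hψ⟩
    obtain ⟨C, hCpos, hpre⟩ :=
      ContinuousLinearMap.exists_preimage_norm_le _ hsT
    refine ⟨C⁻¹, inv_pos.2 hCpos, fun x => ?_⟩
    rcases eq_or_ne x (0 : X) with rfl | hx
    · simp
    obtain ⟨f, hf1, hfx⟩ := exists_dual_vector 𝕜 x (norm_ne_zero_iff.2 hx)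
    obtain ⟨ψ, hψ, hψn⟩ := hpre f
    have hψu : ψ.comp u = f := by simpa using hψ
    have key : ‖x‖ ≤ C * ‖u x‖ := by
      have h1 : ‖x‖ = ‖f x‖ := by rw [hfx]; simp
      have h2 : f x = ψ (u x) := by rw [← hψu]; rfl
      have h3 : ‖ψ (u x)‖ ≤ ‖ψ‖ * ‖u x‖ := ψ.le_opNorm _
      have h4 : ‖ψ‖ ≤ C := by simpa [hf1] using hψn
      calc ‖x‖ = ‖ψ (u x)‖ := by rw [h1, h2]
        _ ≤ ‖ψ‖ * ‖u x‖ := h3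
        _ ≤ C * ‖u x‖ := by
            exact mul_le_mul_of_nonneg_right h4 (norm_nonneg _)
    rw [inv_mul_le_iff₀ hCpos]
    linarith [key]
  -- extract φ outside the range of precomposition
  rw [Function.Surjective] at hns
  push_neg at hns
  obtain ⟨φ, hφ⟩ := hns
  set V : Submodule 𝕜 (𝕜 × Y) :=
    LinearMap.range (LinearMap.prod φ.toLinearMap (-u.toLinearMap)) with hV
  set S : Submodule 𝕜 (𝕜 × Y) := V.topologicalClosure with hS
  have hVcoe : (V : Set (𝕜 × Y)) = Set.range (fun x : X => (φ x, -u x)) := by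
    ext z
    simp [hV, LinearMap.mem_range, LinearMap.prod_apply, Pi.prod]
  haveI : IsClosed (S : Set (𝕜 × Y)) := V.isClosed_topologicalClosure
  -- Step 2: (1, 0) lies in the closure.
  have hmem : ((1 : 𝕜), (0 : Y)) ∈
      closure (Set.range (fun x : X => (φ x, -u x))) := by
    rw [← hVcoe, ← Submodule.topologicalClosure_coe, ← hS]
    by_contra hmemn
    have hmemS : ((1 : 𝕜), (0 : Y)) ∉ S := hmemn
    set z : (𝕜 × Y) ⧸ S := Submodule.Quotient.mk ((1 : 𝕜), (0 : Y)) with hz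
    have hzne : z ≠ 0 := by
      intro h
      exact hmemS ((Submodule.Quotient.mk_eq_zero S).1 h)
    obtain ⟨g, hg1, hgz⟩ := exists_dual_vector 𝕜 z (norm_ne_zero_iff.2 hzne)
    -- F : functional on 𝕜 × Y vanishing on S
    set F : (𝕜 × Y) →L[𝕜] 𝕜 :=
      LinearMap.mkContinuous (g.toLinearMap ∘ₗ S.mkQ) ‖g‖ (fun w => by
        calc ‖g (Submodule.Quotient.mk w)‖ ≤ ‖g‖ * ‖(Submodule.Quotient.mk w : (𝕜 × Y) ⧸ S)‖ :=
              g.le_opNorm _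
          _ ≤ ‖g‖ * ‖w‖ := by
              exact mul_le_mul_of_nonneg_left (Submodule.Quotient.norm_mk_le S w)
                (norm_nonneg g)) with hF
    have hFapp : ∀ w : 𝕜 × Y, F w = g (Submodule.Quotient.mk w) := fun w => rfl
    have hFz : F ((1 : 𝕜), (0 : Y)) = (‖z‖ : 𝕜) := by
      rw [hFapp]; exact hgz
    have hcne : (‖z‖ : 𝕜) ≠ 0 := by
      simpa using (norm_ne_zero_iff.2 hzne)
    have hFV : ∀ x : X, F (φ x, -u x) = 0 := by
      intro x
      have hxV : ((φ x, -u x) : 𝕜 × Y) ∈ V := ⟨x, rfl⟩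
      have hxS : ((φ x, -u x) : 𝕜 × Y) ∈ S := Submodule.le_topologicalClosure V hxV
      rw [hFapp, (Submodule.Quotient.mk_eq_zero S).2 hxS, map_zero]
    -- build ψ with ψ ∘ u = φ, contradiction
    set c : 𝕜 := (‖z‖ : 𝕜) with hc
    set ψ : Y →L[𝕜] 𝕜 := c⁻¹ • F.comp (ContinuousLinearMap.inr 𝕜 𝕜 Y) with hψ
    apply hφ ψ
    ext x
    have hsplit : ((φ x, -u x) : 𝕜 × Y)
        = φ x • ((1 : 𝕜), (0 : Y)) + ((0 : 𝕜), -u x) := by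
      simp [Prod.ext_iff]
    have h0 : φ x * c + F ((0 : 𝕜), -u x) = 0 := by
      have := hFV x
      rw [hsplit, map_add, map_smul, smul_eq_mul, hFz] at this
      exact this
    have hFneg : F ((0 : 𝕜), -u x) = -F ((0 : 𝕜), u x) := by
      have : ((0 : 𝕜), -u x) = -(((0 : 𝕜), u x) : 𝕜 × Y) := by simp
      rw [this, map_neg]
    have hFu : F ((0 : 𝕜), u x) = φ x * c := by
      rw [hFneg] at h0; linear_combination -h0
    have : ψ (u x) = c⁻¹ * F ((0 : 𝕜), u x) := by
      simp [hψ, smul_eq_mul]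
    calc (ψ.comp u) x = ψ (u x) := rfl
      _ = c⁻¹ * (φ x * c) := by rw [this, hFu]
      _ = φ x := by field_simp
  refine ⟨φ, hmem, ?_, ?_⟩
  · rw [Submodule.Quotient.mk_eq_zero]
    rw [← SetLike.mem_coe, Submodule.topologicalClosure_coe]
    rw [← hV]
    rw [hVcoe]
    exact hmem
  · intro hinj
    have h10 : Submodule.Quotient.mk
        (p := Submodule.topologicalClosure
          (LinearMap.range (LinearMap.prod φ.toLinearMap (-u.toLinearMap))))
        ((1 : 𝕜), (0 : Y)) = 0 := by
      rw [Submodule.Quotient.mk_eq_zero]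
      rw [← SetLike.mem_coe, Submodule.topologicalClosure_coe, ← hV, hVcoe]
      exact hmem
    have h00 : Submodule.Quotient.mk
        (p := Submodule.topologicalClosure
          (LinearMap.range (LinearMap.prod φ.toLinearMap (-u.toLinearMap))))
        ((0 : 𝕜), (0 : Y)) = 0 := by
      exact (Submodule.Quotient.mk_eq_zero _).2 (Submodule.zero_mem _)
    have : (1 : 𝕜) = 0 := hinj (h10.trans h00.symm)
    exact one_ne_zero this
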